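/- For every real x ≥ 1 and every natural number t ≥ 0, Φ_t(x) > 0 and the logarithmic derivatives satisfy 0 = Φ_0'(x)/Φ_0(x) ≤ Φ_t'(x)/Φ_t(x) ≤ Φ_{t+1}'(x)/Φ_{t+1}(x); i.e., the sequence (Φ_t'(x)/Φ_t(x))_{t≥0} is nonnegative and nondecreasing in t. -/
import Mathlib


/-- Φ_t, the degree-t Chebyshev polynomial of the first kind over ℝ:
Φ_0(x)=1, Φ_1(x)=x, Φ_{t+1}(x)=2x·Φ_t(x)−Φ_{t−1}(x). -/
noncomputable def Phi (t : ℕ) : Polynomial ℝ := Polynomial.Chebyshev.T ℝ t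

lemma Phi_add_two (t : ℕ) : Phi (t + 2) = 2 * Polynomial.X * Phi (t + 1) - Phi t := by
  unfold Phi
  have := Polynomial.Chebyshev.T_add_two ℝ (t : ℤ)
  push_cast
  convert this using 3

lemma Phi_zero : Phi 0 = 1 := by
  unfold Phi; exact Polynomial.Chebyshev.T_zero ℝ

lemma Phi_one : Phi 1 = Polynomial.X := by
  unfold Phi; exact_mod_cast Polynomial.Chebyshev.T_one ℝ

lemma cheb_aux (x : ℝ) (hx : 1 ≤ x) (t : ℕ) :
    1 ≤ (Phi t).eval x ∧ (Phi t).eval x ≤ (Phi (t+1)).eval x ∧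
    0 ≤ (Polynomial.derivative (Phi t)).eval x ∧
    (Polynomial.derivative (Phi t)).eval x ≤ (Polynomial.derivative (Phi (t+1))).eval x ∧
    1 ≤ (Polynomial.derivative (Phi (t+1))).eval x * (Phi t).eval x
        - (Polynomial.derivative (Phi t)).eval x * (Phi (t+1)).eval x := by
  induction t with
  | zero => simp [Phi_zero, Phi_one, hx]
  | succ t ih =>
    obtain ⟨h1, h2, h3, h4, h5⟩ := ih
    have hp : (Phi (t+2)).eval x
        = 2 * x * (Phi (t+1)).eval x - (Phi t).eval x := by
      rw [Phi_add_two]; simp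
    have hd : (Polynomial.derivative (Phi (t+2))).eval x
        = 2 * (Phi (t+1)).eval x + 2 * x * (Polynomial.derivative (Phi (t+1))).eval x
          - (Polynomial.derivative (Phi t)).eval x := by
      rw [Phi_add_two]
      simp [Polynomial.derivative_mul]
    refine ⟨by linarith, ?_, by linarith, ?_, ?_⟩
    · rw [hp]; nlinarith
    · rw [hd]; nlinarith
    · rw [hp, hd]; nlinarith

/-- For x ≥ 1 and every t ≥ 0, Φ_t(x) > 0 and the logarithmic derivatives
Φ_t'(x)/Φ_t(x) form a nonnegative, nondecreasing sequence in t, starting from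
Φ_0'(x)/Φ_0(x) = 0. -/
theorem chebyshev_log_deriv_monotone (x : ℝ) (hx : 1 ≤ x) (t : ℕ) :
    0 < (Phi t).eval x ∧
    (Polynomial.derivative (Phi 0)).eval x / (Phi 0).eval x = 0 ∧
    0 ≤ (Polynomial.derivative (Phi t)).eval x / (Phi t).eval x ∧
    (Polynomial.derivative (Phi t)).eval x / (Phi t).eval x ≤
      (Polynomial.derivative (Phi (t + 1))).eval x / (Phi (t + 1)).eval x := by
  obtain ⟨h1, h2, h3, h4, h5⟩ := cheb_aux x hx t
  have hpt : (0:ℝ) < (Phi t).eval x := by linarith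
  have hpt1 : (0:ℝ) < (Phi (t+1)).eval x := by linarith
  refine ⟨hpt, by simp [Phi_zero], div_nonneg h3 hpt.le, ?_⟩
  rw [div_le_div_iff₀ hpt hpt1]
  nlinarith
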